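/- arXiv:1708.09630 — 3 statements merged into one kernel-verified Lean document; each statement's English description precedes it below -/
import Mathlib

section
/- Let L ∈ ℝ^{N×N} be a matrix with nonpositive off-diagonal entries whose row sums are zero (a graph Laplacian), and let Σ = diag(b₁,…,b_N) with bᵢ ≥ 0 and at least one bᵢ > 0. If the associated directed graph (with the leader pinned to the nodes with bᵢ > 0) contains a spanning tree rooted at the leader, then L + Σ is nonsingular and all its eigenvalues have positive real part (it is a nonsingular M-matrix). -/
open Matrix Finset

lemma rtg_reverse' {α} {r : α → α → Prop} {a b : α} (h : Relation.ReflTransGen r a b) :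
    Relation.ReflTransGen (fun x y => r y x) b a := by
  induction h with
  | refl => exact .refl
  | tail h1 h2 ih => exact Relation.ReflTransGen.head h2 ih

/-- Weakly chained diagonally dominant matrices have trivial kernel. -/
lemma wcdd_kernel {N : ℕ} (M : Matrix (Fin N) (Fin N) ℂ)
    (hdom : ∀ i, ∑ j ∈ Finset.univ.erase i, ‖M i j‖ ≤ ‖M i i‖)
    (hre : ∀ i, ∃ r, (∑ j ∈ Finset.univ.erase r, ‖M r j‖ < ‖M r r‖) ∧
      Relation.ReflTransGen (fun p q => M p q ≠ 0) i r)
    (x : Fin N → ℂ) (hx : M.mulVec x = 0) : x = 0 := by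
  by_contra hxne
  obtain ⟨k, hk⟩ := Function.ne_iff.mp hxne
  have hN : (Finset.univ : Finset (Fin N)).Nonempty := ⟨k, mem_univ k⟩
  obtain ⟨i₀, -, hi₀⟩ := Finset.exists_max_image Finset.univ (fun j => ‖x j‖) hN
  set s : ℝ := ‖x i₀‖ with hs
  have hsle : ∀ j, ‖x j‖ ≤ s := fun j => hi₀ j (mem_univ j)
  have hspos : 0 < s := lt_of_lt_of_le (norm_pos_iff.mpr hk) (hsle k)
  have key : ∀ i, ‖x i‖ = s →
      (‖M i i‖ * s ≤ (∑ j ∈ Finset.univ.erase i, ‖M i j‖) * s ∧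
       ∀ j, M i j ≠ 0 → ‖x j‖ = s) := by
    intro i hi
    have hrow : ∑ j, M i j * x j = 0 := by
      have := congrFun hx i
      simpa [Matrix.mulVec, dotProduct] using this
    have hMx : M i i * x i = -∑ j ∈ Finset.univ.erase i, M i j * x j := by
      have h := Finset.add_sum_erase Finset.univ (fun j => M i j * x j) (mem_univ i)
      rw [hrow] at h
      exact eq_neg_of_add_eq_zero_left h
    have hA : ‖M i i‖ * s = ‖∑ j ∈ Finset.univ.erase i, M i j * x j‖ := by
      rw [← hi, ← norm_mul, hMx, norm_neg]
    have hB : ‖∑ j ∈ Finset.univ.erase i, M i j * x j‖ ≤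
        ∑ j ∈ Finset.univ.erase i, ‖M i j‖ * ‖x j‖ := by
      refine (norm_sum_le _ _).trans ?_
      exact le_of_eq (Finset.sum_congr rfl fun j _ => norm_mul _ _)
    have hC : ∑ j ∈ Finset.univ.erase i, ‖M i j‖ * ‖x j‖ ≤
        ∑ j ∈ Finset.univ.erase i, ‖M i j‖ * s :=
      Finset.sum_le_sum fun j _ => mul_le_mul_of_nonneg_left (hsle j) (norm_nonneg _)
    have hD : (∑ j ∈ Finset.univ.erase i, ‖M i j‖) * s =
        ∑ j ∈ Finset.univ.erase i, ‖M i j‖ * s := Finset.sum_mul _ _ _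
    have h1 : ‖M i i‖ * s ≤ (∑ j ∈ Finset.univ.erase i, ‖M i j‖) * s := by
      rw [hA, hD]; exact hB.trans hC
    refine ⟨h1, ?_⟩
    have h2 : (∑ j ∈ Finset.univ.erase i, ‖M i j‖) * s ≤ ‖M i i‖ * s :=
      mul_le_mul_of_nonneg_right (hdom i) hspos.le
    have heq : ∑ j ∈ Finset.univ.erase i, ‖M i j‖ * ‖x j‖ =
        ∑ j ∈ Finset.univ.erase i, ‖M i j‖ * s := by
      apply le_antisymm hC
      rw [← hD]
      calc (∑ j ∈ Finset.univ.erase i, ‖M i j‖) * s ≤ ‖M i i‖ * s := h2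
        _ = _ := hA
        _ ≤ _ := hB
    have hterm := (Finset.sum_eq_sum_iff_of_le
      (fun j (_ : j ∈ Finset.univ.erase i) =>
        mul_le_mul_of_nonneg_left (hsle j) (norm_nonneg (M i j)))).mp heq
    intro j hMij
    by_cases hji : j = i
    · rw [hji]; exact hi
    · have hj : j ∈ Finset.univ.erase i := Finset.mem_erase.mpr ⟨hji, mem_univ j⟩
      have := hterm j hj
      exact mul_left_cancel₀ (norm_ne_zero_iff.mpr hMij) this
  obtain ⟨r, hr, hpath⟩ := hre i₀
  have hinv : ‖x r‖ = s := by
    clear hr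
    induction hpath with
    | refl => rfl
    | tail h1 h2 ih => exact (key _ ih).2 _ h2
  have hcontra : ‖M r r‖ * s < ‖M r r‖ * s :=
    lt_of_le_of_lt (key r hinv).1 (mul_lt_mul_of_pos_right hr hspos)
  exact absurd hcontra (lt_irrefl _)


/-- Lemma 1: if `L` is a graph Laplacian (nonpositive off-diagonal entries, zero
row sums) and `Σ = diag(b)` is a nonnegative diagonal pinning matrix with some
`bᵢ > 0`, and every node is reachable from a pinned node (spanning tree rooted
at the leader), then `L + Σ` is a nonsingular M-matrix: it is invertible and
all its (complex) eigenvalues have positive real part. -/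
theorem laplacian_plus_pinning_is_nonsingular_M_matrix
    {N : ℕ} (L : Matrix (Fin N) (Fin N) ℝ) (b : Fin N → ℝ)
    (hoffdiag : ∀ i j, i ≠ j → L i j ≤ 0)
    (hrowsum : ∀ i, ∑ j, L i j = 0)
    (hb : ∀ i, 0 ≤ b i) (hb' : ∃ i, 0 < b i)
    -- spanning tree rooted at the leader: every node is reachable from some
    -- pinned node, where there is an edge from `p` to `q` iff `a_{qp} = -L q p > 0`
    (hreach : ∀ i : Fin N, ∃ r : Fin N, 0 < b r ∧
      Relation.ReflTransGen (fun p q : Fin N => L q p < 0) r i) :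
    IsUnit (L + Matrix.diagonal b) ∧
      ∀ μ ∈ spectrum ℂ ((L + Matrix.diagonal b).map (Complex.ofReal)), 0 < μ.re := by
  set Mc : Matrix (Fin N) (Fin N) ℂ := (L + Matrix.diagonal b).map Complex.ofReal with hMc
  have hdiagL : ∀ i, L i i = ∑ j ∈ Finset.univ.erase i, -L i j := by
    intro i
    have h : L i i + ∑ j ∈ Finset.univ.erase i, L i j = 0 := by
      rw [Finset.add_sum_erase Finset.univ (fun j => L i j) (mem_univ i)]
      exact hrowsum i
    rw [eq_neg_of_add_eq_zero_left h, Finset.sum_neg_distrib]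
  have hLnn : ∀ i, 0 ≤ L i i := by
    intro i
    rw [hdiagL i]
    exact Finset.sum_nonneg fun j hj =>
      neg_nonneg.mpr (hoffdiag i j (Ne.symm (Finset.mem_erase.mp hj).1))
  -- for every μ with Re μ ≤ 0, `algebraMap μ - Mc` is a unit
  have hunit : ∀ μ : ℂ, μ.re ≤ 0 →
      IsUnit (algebraMap ℂ (Matrix (Fin N) (Fin N) ℂ) μ - Mc) := by
    intro μ hμ
    set Mμ : Matrix (Fin N) (Fin N) ℂ := algebraMap ℂ _ μ - Mc with hMμ
    have hoff : ∀ i j, i ≠ j → Mμ i j = -(L i j : ℂ) := by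
      intro i j hij
      simp [hMμ, hMc, Matrix.algebraMap_matrix_apply, Matrix.diagonal_apply_ne _ hij, hij,
        Matrix.sub_apply, Matrix.map_apply, Matrix.add_apply]
    have hsum : ∀ i, ∑ j ∈ Finset.univ.erase i, ‖Mμ i j‖ = L i i := by
      intro i
      rw [hdiagL i]
      refine Finset.sum_congr rfl fun j hj => ?_
      have hji : j ≠ i := (Finset.mem_erase.mp hj).1
      rw [hoff i j hji.symm, norm_neg, Complex.norm_real, Real.norm_eq_abs,
        abs_of_nonpos (hoffdiag i j hji.symm)]
    have hdiag : ∀ i, L i i + b i - μ.re ≤ ‖Mμ i i‖ := by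
      intro i
      have h1 : (Mμ i i).re = μ.re - (L i i + b i) := by
        simp [hMμ, hMc, Matrix.algebraMap_matrix_apply, Matrix.sub_apply, Matrix.map_apply,
          Matrix.add_apply, Matrix.diagonal_apply_eq]
      calc L i i + b i - μ.re = -(Mμ i i).re := by rw [h1]; ring
        _ ≤ |(Mμ i i).re| := neg_le_abs _
        _ ≤ ‖Mμ i i‖ := Complex.abs_re_le_norm _
    have hdom : ∀ i, ∑ j ∈ Finset.univ.erase i, ‖Mμ i j‖ ≤ ‖Mμ i i‖ := by
      intro i
      rw [hsum i]
      have := hdiag i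
      have := hb i
      linarith
    have hre : ∀ i, ∃ r, (∑ j ∈ Finset.univ.erase r, ‖Mμ r j‖ < ‖Mμ r r‖) ∧
        Relation.ReflTransGen (fun p q => Mμ p q ≠ 0) i r := by
      intro i
      obtain ⟨r, hbr, hpath⟩ := hreach i
      refine ⟨r, ?_, ?_⟩
      · rw [hsum r]
        have := hdiag r
        linarith
      · refine Relation.ReflTransGen.mono ?_ _ _ (rtg_reverse' hpath)
        intro p q hpq
        have hne : p ≠ q := by
          intro h
          rw [h] at hpq
          exact absurd hpq (not_lt.mpr (hLnn q))
        rw [hoff p q hne]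
        simpa using ne_of_lt hpq
    have hdet : Mμ.det ≠ 0 := by
      intro h0
      obtain ⟨v, hv, hv0⟩ := (Matrix.exists_mulVec_eq_zero_iff).mpr h0
      exact hv (wcdd_kernel Mμ hdom hre v hv0)
    exact (Matrix.isUnit_iff_isUnit_det Mμ).mpr (isUnit_iff_ne_zero.mpr hdet)
  constructor
  · -- real invertibility from the μ = 0 case
    have h0 := hunit 0 le_rfl
    rw [map_zero, zero_sub] at h0
    have hMcUnit : IsUnit Mc := by simpa using h0.neg
    have hdetC : Mc.det ≠ 0 :=
      IsUnit.ne_zero ((Matrix.isUnit_iff_isUnit_det Mc).mp hMcUnit)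
    have hdetR : (L + Matrix.diagonal b).det ≠ 0 := by
      intro h
      apply hdetC
      have hmm : (L + Matrix.diagonal b).map Complex.ofReal =
          Complex.ofRealHom.mapMatrix (L + Matrix.diagonal b) := rfl
      rw [hMc, hmm, ← RingHom.map_det, h]
      simp
    exact (Matrix.isUnit_iff_isUnit_det _).mpr (isUnit_iff_ne_zero.mpr hdetR)
  · intro μ hμ
    by_contra hre
    push_neg at hre
    exact (spectrum.mem_iff.mp hμ) (hunit μ hre)
end

section
/- Let P be symmetric positive definite satisfying AᵀP + PA + I − PBBᵀP = 0, let Φ = diag(φᵢ) with φᵢ > 0, let H satisfy S := ΦH + HᵀΦ ≻ 0, and let c ≥ φ_max/λ_min(S). Then the quadratic form η ↦ ηᵀ[Φ ⊗ (PA + AᵀP) − c·S ⊗ (PBBᵀP)]η satisfies ηᵀ[Φ ⊗ (PA + AᵀP) − c·S ⊗ PBBᵀP]η ≤ −ηᵀ(Φ ⊗ I_n)η for all η ∈ ℝ^{Nn}. -/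
open Matrix Kronecker

private lemma quad_kron {N n : ℕ} (X : Matrix (Fin N) (Fin N) ℝ)
    (Y : Matrix (Fin n) (Fin n) ℝ) (η : Fin N × Fin n → ℝ) :
    η ⬝ᵥ (X ⊗ₖ Y).mulVec η
      = ∑ i, ∑ j, X i j * ((fun k => η (i,k)) ⬝ᵥ Y.mulVec (fun l => η (j,l))) := by
  simp only [dotProduct, mulVec, kroneckerMap_apply, Fintype.sum_prod_type,
    Finset.mul_sum, Finset.sum_mul]
  rw [Finset.sum_congr rfl (fun i _ => Finset.sum_comm)]
  apply Finset.sum_congr rfl; intro i _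
  apply Finset.sum_congr rfl; intro j _
  apply Finset.sum_congr rfl; intro k _
  apply Finset.sum_congr rfl; intro l _
  ring

private lemma triple_swap {N m : ℕ} (f : Fin N → Fin N → Fin m → ℝ) :
    ∑ i, ∑ j, ∑ k, f i j k = ∑ k, ∑ i, ∑ j, f i j k := by
  rw [Finset.sum_congr rfl (fun i _ => Finset.sum_comm)]
  exact Finset.sum_comm

/-- Estimate (51): if `P ≻ 0` solves the observer ARE `AᵀP + PA + I − PBBᵀP = 0`,
`Φ = diag(φ)` with `φᵢ > 0`, `S = ΦH + HᵀΦ ≻ 0` with minimum-eigenvalue lower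
bound `lam`, and `c ≥ φmax / lam`, then for all `η`
`ηᵀ[Φ ⊗ (PA + AᵀP) − c·S ⊗ PBBᵀP]η ≤ −ηᵀ(Φ ⊗ Iₙ)η`. -/
theorem lyapunov_V1_bound
    {N n m : ℕ}
    (A : Matrix (Fin n) (Fin n) ℝ) (B : Matrix (Fin n) (Fin m) ℝ)
    (P : Matrix (Fin n) (Fin n) ℝ) (hP : P.IsSymm) (hPpos : P.PosDef)
    (hare : Aᵀ * P + P * A + 1 - P * B * Bᵀ * P = 0)
    (φ : Fin N → ℝ) (hφ : ∀ i, 0 < φ i)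
    (H : Matrix (Fin N) (Fin N) ℝ)
    (S : Matrix (Fin N) (Fin N) ℝ)
    (hS : S = Matrix.diagonal φ * H + Hᵀ * Matrix.diagonal φ) (hSpos : S.PosDef)
    (lam : ℝ) (hlam_pos : 0 < lam)
    (hlam : ∀ x : Fin N → ℝ, lam * (∑ i, x i ^ 2) ≤ x ⬝ᵥ S.mulVec x)
    (φmax : ℝ) (hφmax : ∀ i, φ i ≤ φmax) (hφmax' : N ≠ 0 → ∃ i, φ i = φmax)
    (c : ℝ) (hc : c ≥ φmax / lam) :
    ∀ η : Fin N × Fin n → ℝ,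
      η ⬝ᵥ ((Matrix.diagonal φ ⊗ₖ (P * A + Aᵀ * P))
          - c • (S ⊗ₖ (P * B * Bᵀ * P))).mulVec η
        ≤ - (η ⬝ᵥ ((Matrix.diagonal φ ⊗ₖ (1 : Matrix (Fin n) (Fin n) ℝ)).mulVec η)) := by
  intro η
  rcases Nat.eq_zero_or_pos N with hN | hN
  · subst hN
    simp [dotProduct]
  have hNne : N ≠ 0 := Nat.pos_iff_ne_zero.mp hN
  obtain ⟨i0, hi0⟩ := hφmax' hNne
  have hφmax_pos : 0 < φmax := hi0 ▸ hφ i0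
  have hc0 : 0 ≤ c := le_trans (le_of_lt (div_pos hφmax_pos hlam_pos)) hc
  have hclam : φmax ≤ c * lam := by
    rw [ge_iff_le, div_le_iff₀ hlam_pos] at hc; exact hc
  set M : Matrix (Fin n) (Fin n) ℝ := P * B * Bᵀ * P with hMdef
  have hM : P * A + Aᵀ * P = M - 1 := by
    rw [add_comm]
    have := sub_eq_zero.mp hare
    exact eq_sub_of_add_eq this
  set z : Fin N → Fin m → ℝ := fun i => (Bᵀ * P).mulVec (fun k => η (i, k)) with hz
  have hMquad : ∀ i j : Fin N,
      (fun k => η (i,k)) ⬝ᵥ M.mulVec (fun l => η (j,l)) = z i ⬝ᵥ z j := by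
    intro i j
    have hQt : (Bᵀ * P)ᵀ = P * B := by
      rw [transpose_mul, transpose_transpose, hP.eq]
    have hMfac : M = (Bᵀ * P)ᵀ * (Bᵀ * P) := by
      rw [hQt, hMdef]; exact Matrix.mul_assoc (P * B) Bᵀ P
    rw [hMfac, ← mulVec_mulVec, Matrix.dotProduct_mulVec, vecMul_transpose]
  rw [Matrix.sub_mulVec, dotProduct_sub, hM]
  have hksub : Matrix.diagonal φ ⊗ₖ (M - 1)
      = Matrix.diagonal φ ⊗ₖ M - Matrix.diagonal φ ⊗ₖ (1 : Matrix (Fin n) (Fin n) ℝ) := by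
    ext ⟨i, k⟩ ⟨j, l⟩
    simp [mul_sub]
  rw [hksub, Matrix.sub_mulVec, dotProduct_sub, Matrix.smul_mulVec, dotProduct_smul,
    smul_eq_mul]
  have key : η ⬝ᵥ (Matrix.diagonal φ ⊗ₖ M).mulVec η
      ≤ c * (η ⬝ᵥ (S ⊗ₖ M).mulVec η) := by
    rw [quad_kron, quad_kron]
    simp only [hMquad]
    have hdiag : (∑ i, ∑ j, Matrix.diagonal φ i j * (z i ⬝ᵥ z j))
        = ∑ i, φ i * (∑ k, (z i k)^2) := by
      apply Finset.sum_congr rfl; intro i _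
      rw [Finset.sum_eq_single i]
      · simp [dotProduct, sq]
      · intro j _ hji
        simp [Matrix.diagonal_apply_ne' φ hji]
      · simp
    rw [hdiag]
    have h1 : (∑ i, φ i * (∑ k, (z i k)^2)) ≤ φmax * ∑ i, ∑ k, (z i k)^2 := by
      rw [Finset.mul_sum]
      apply Finset.sum_le_sum; intro i _
      apply mul_le_mul_of_nonneg_right (hφmax i)
      positivity
    have h2 : lam * (∑ i, ∑ k, (z i k)^2) ≤ ∑ i, ∑ j, S i j * (z i ⬝ᵥ z j) := by
      have step1 : (∑ i, ∑ j, S i j * (z i ⬝ᵥ z j))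
          = ∑ i, ∑ j, ∑ k, S i j * (z i k * z j k) := by
        apply Finset.sum_congr rfl; intro i _
        apply Finset.sum_congr rfl; intro j _
        rw [dotProduct, Finset.mul_sum]
      have step2 : ∀ k : Fin m, (fun i => z i k) ⬝ᵥ S.mulVec (fun i => z i k)
          = ∑ i, ∑ j, S i j * (z i k * z j k) := by
        intro k
        simp only [dotProduct, mulVec, Finset.mul_sum]
        apply Finset.sum_congr rfl; intro i _
        apply Finset.sum_congr rfl; intro j _
        ring
      have hsw : (∑ i, ∑ k, (z i k)^2) = ∑ k : Fin m, ∑ i, (z i k)^2 :=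
        Finset.sum_comm
      rw [step1, triple_swap, hsw, Finset.mul_sum]
      apply Finset.sum_le_sum; intro k _
      rw [← step2 k]
      exact hlam _
    calc (∑ i, φ i * (∑ k, (z i k)^2)) ≤ φmax * ∑ i, ∑ k, (z i k)^2 := h1
      _ ≤ (c * lam) * ∑ i, ∑ k, (z i k)^2 := by
          apply mul_le_mul_of_nonneg_right hclam
          positivity
      _ = c * (lam * ∑ i, ∑ k, (z i k)^2) := by ring
      _ ≤ c * (∑ i, ∑ j, S i j * (z i ⬝ᵥ z j)) := mul_le_mul_of_nonneg_left h2 hc0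
  linarith
end

section
/- Let L̄ ∈ ℝ^{(N+1)×(N+1)} be as in the previous partition and K ∈ ℝ^{m×n}. If x_{ss} ∈ ℝ^{(N+1)n} satisfies c̄(L̄ ⊗ K)x_{ss} = ω̄ where ω̄ = (0, ω₁,…,ω_N) with ωⱼ = 0 for all j ≠ i, and the global neighborhood tracking error is e = −(L̄ ⊗ I_n)x_{ss} (restricted to followers), then c̄·K·eⱼ = −ωⱼ for every follower j; in particular K·eⱼ = 0 for all intact followers j ≠ i. -/
open Matrix Kronecker

lemma key_aux {N n m : ℕ}
    (Lbar : Matrix (Fin (N + 1)) (Fin (N + 1)) ℝ)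
    (K : Matrix (Fin m) (Fin n) ℝ)
    (xss : Fin (N + 1) × Fin n → ℝ)
    (e : Fin N → Fin n → ℝ)
    (he : ∀ j k, e j k =
      -((Lbar ⊗ₖ (1 : Matrix (Fin n) (Fin n) ℝ)).mulVec xss) (j.succ, k))
    (j : Fin N) (l : Fin m) :
    K.mulVec (e j) l = -((Lbar ⊗ₖ K).mulVec xss) (j.succ, l) := by
  simp only [Matrix.mulVec, dotProduct, he, Matrix.kroneckerMap_apply,
    Fintype.sum_prod_type, Matrix.one_apply, mul_ite, mul_one, mul_zero,
    Finset.sum_ite_eq, Finset.mem_univ, if_true, mul_neg, neg_neg,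
    ← Finset.sum_neg_distrib, Finset.mul_sum, Finset.sum_mul]
  rw [Finset.sum_comm]
  congr 1; ext q; congr 1; ext k
  simp [mul_ite, ite_mul, mul_zero, zero_mul, neg_zero, Finset.sum_ite_eq]
  ring

/-- Identity (47)–(48) of Theorem 2: if `x_ss` satisfies
`c̄(L̄ ⊗ K) x_ss = ω̄` where only agent `i` is attacked (`ωⱼ = 0` for `j ≠ i`),
and `e` is the (follower part of the) global neighborhood tracking error
`e = −(L̄ ⊗ Iₙ) x_ss`, then `c̄·K·eⱼ = −ωⱼ` for every follower `j`; in
particular `K·eⱼ = 0` for all intact followers `j ≠ i`. -/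
theorem stealthy_attack_zero_tracking_error
    {N n m : ℕ}
    (Lbar : Matrix (Fin (N + 1)) (Fin (N + 1)) ℝ)
    (hleader : ∀ j, Lbar 0 j = 0)
    (K : Matrix (Fin m) (Fin n) ℝ)
    (cbar : ℝ) (hc : 0 < cbar)
    (i : Fin N)
    (xss : Fin (N + 1) × Fin n → ℝ)
    (ωbar : Fin (N + 1) × Fin m → ℝ)
    (hω0 : ∀ l, ωbar (0, l) = 0)
    (hωj : ∀ j : Fin N, j ≠ i → ∀ l, ωbar (j.succ, l) = 0)
    (hss : cbar • (Lbar ⊗ₖ K).mulVec xss = ωbar)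
    (e : Fin N → Fin n → ℝ)
    (he : ∀ j k, e j k =
      -((Lbar ⊗ₖ (1 : Matrix (Fin n) (Fin n) ℝ)).mulVec xss) (j.succ, k)) :
    (∀ j : Fin N, cbar • K.mulVec (e j) = fun l => -ωbar (j.succ, l)) ∧
      (∀ j : Fin N, j ≠ i → K.mulVec (e j) = 0) := by
  have h1 : ∀ j : Fin N, cbar • K.mulVec (e j) = fun l => -ωbar (j.succ, l) := by
    intro j
    funext l
    have := congrFun hss (j.succ, l)
    simp only [Pi.smul_apply, smul_eq_mul] at this ⊢
    rw [key_aux Lbar K xss e he j l, ← this]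
    ring
  refine ⟨h1, fun j hj => ?_⟩
  funext l
  have := congrFun (h1 j) l
  simp only [Pi.smul_apply, smul_eq_mul, hωj j hj l, neg_zero] at this
  have := mul_eq_zero.mp this
  simpa [hc.ne'] using this
end
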